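/- Let p be a prime not dividing the order of the Weyl group W of Φ. Let Δ be a base of Φ, let Θ ⊆ Δ, and let Φ_Θ = Φ ∩ (ℤ-span of Θ) with coroots Φ̌_Θ = {α̌ : α ∈ Φ_Θ}. Then the weight lattice P(Φ_Θ) = {v ∈ ℚ-span of Φ_Θ : ⟨v, α̌⟩ ∈ ℤ for all α ∈ Φ_Θ} contains the root lattice Q(Φ_Θ) = ℤ-span of Φ_Θ as a subgroup of finite index (the index of connection of Φ_Θ), and p does not divide this index. -/

import Mathlib

lemma exists_posdef_form (V : Type*) [AddCommGroup V] [Module ℚ V] [FiniteDimensional ℚ V] :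
    ∃ F : V →ₗ[ℚ] V →ₗ[ℚ] ℚ, (∀ x, 0 ≤ F x x) ∧ ∀ x, F x x = 0 → x = 0 := by
  classical
  set b := Module.finBasis ℚ V with hb
  refine ⟨LinearMap.mk₂ ℚ (fun x y => ∑ i, b.repr x i * b.repr y i)
    (fun x x' y => ?_) (fun c x y => ?_) (fun x y y' => ?_) (fun c x y => ?_), ?_, ?_⟩
  · simp [add_mul, Finset.sum_add_distrib]
  · simp [Finset.mul_sum, mul_assoc]
  · simp [mul_add, Finset.sum_add_distrib]
  · simp [Finset.mul_sum, mul_left_comm]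
  · intro x
    simp only [LinearMap.mk₂_apply]
    exact Finset.sum_nonneg fun i _ => mul_self_nonneg _
  · intro x hx
    simp only [LinearMap.mk₂_apply] at hx
    have h0 : ∀ i ∈ Finset.univ, b.repr x i * b.repr x i = 0 :=
      (Finset.sum_eq_zero_iff_of_nonneg (fun i _ => mul_self_nonneg _)).mp hx
    have hz : b.repr x = 0 := Finsupp.ext fun i => mul_self_eq_zero.mp (h0 i (Finset.mem_univ i))
    exact (LinearEquiv.map_eq_zero_iff b.repr).mp hz

/-- The weight lattice of the (sub)system with roots `S`: the elements of the `ℚ`-span of `S`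
pairing integrally (via `B`) with every coroot `coroot α`, `α ∈ S`. -/
def weightLattice {V V' : Type*} [AddCommGroup V] [Module ℚ V] [AddCommGroup V'] [Module ℚ V']
    (B : V →ₗ[ℚ] V' →ₗ[ℚ] ℚ) (coroot : V → V') (S : Set V) : AddSubgroup V where
  carrier := {v | v ∈ Submodule.span ℚ S ∧ ∀ α ∈ S, ∃ n : ℤ, B v (coroot α) = (n : ℚ)}
  zero_mem' := ⟨Submodule.zero_mem _, fun α _ => ⟨0, by simp⟩⟩
  add_mem' := by
    rintro a b ⟨ha, ha'⟩ ⟨hb, hb'⟩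
    refine ⟨Submodule.add_mem _ ha hb, fun α hα => ?_⟩
    obtain ⟨n, hn⟩ := ha' α hα
    obtain ⟨m, hm⟩ := hb' α hα
    exact ⟨n + m, by rw [map_add, LinearMap.add_apply, hn, hm]; push_cast; ring⟩
  neg_mem' := by
    rintro a ⟨ha, ha'⟩
    refine ⟨Submodule.neg_mem _ ha, fun α hα => ?_⟩
    obtain ⟨n, hn⟩ := ha' α hα
    exact ⟨-n, by rw [map_neg, LinearMap.neg_apply, hn]; push_cast; ring⟩

/-- A perfect pairing of two (left) modules (the structure of Mathlib of December 2024, since removed). -/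
structure PerfectPairing (R M N : Type*) [CommRing R] [AddCommGroup M] [Module R M]
    [AddCommGroup N] [Module R N] where
  toLin : M →ₗ[R] N →ₗ[R] R
  bijectiveLeft : Function.Bijective toLin
  bijectiveRight : Function.Bijective toLin.flip

/-- Let `Φ` be a finite, reduced, crystallographic root system with Weyl group
`W = ⟨s α : α ∈ Φ⟩` and `p` a prime not dividing `|W|`.  Let `Δ` be a base of `Φ`, `Θ ⊆ Δ`, and
`Φ_Θ = Φ ∩ ℤΘ`.  Then the root lattice `Q(Φ_Θ) = ℤΦ_Θ` is contained in the weight lattice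
`P(Φ_Θ)` with finite index (the index of connection of `Φ_Θ`), and `p` does not divide this
index. -/
theorem index_of_connection_not_dvd
    {V V' : Type*} [AddCommGroup V] [Module ℚ V] [AddCommGroup V'] [Module ℚ V']
    [FiniteDimensional ℚ V] [FiniteDimensional ℚ V']
    (P : PerfectPairing ℚ V V')
    (Φ : Set V) (hfin : Φ.Finite) (coroot : V → V')
    (h2 : ∀ α ∈ Φ, P.toLin α (coroot α) = 2)
    (hcrys : ∀ α ∈ Φ, ∀ β ∈ Φ, ∃ n : ℤ, P.toLin β (coroot α) = (n : ℚ))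
    (hred : ∀ α ∈ Φ, ∀ c : ℚ, c • α ∈ Φ → c = 1 ∨ c = -1)
    (s : V → (V ≃ₗ[ℚ] V))
    (hs_def : ∀ α ∈ Φ, ∀ v : V, s α v = v - (P.toLin v (coroot α)) • α)
    (hs_perm : ∀ α ∈ Φ, ∀ β ∈ Φ, s α β ∈ Φ)
    (p : ℕ) (hp : p.Prime)
    (hpW : ¬ p ∣ Nat.card ↥(Subgroup.closure (s '' Φ)))
    (Δ : Set V) (hΔΦ : Δ ⊆ Φ)
    (hΔind : LinearIndependent ℚ ((↑) : Δ → V))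
    (hΔbase : ∀ β ∈ Φ, ∃ c : V →₀ ℤ, ↑c.support ⊆ Δ ∧
        β = c.sum (fun α n => (n : ℚ) • α) ∧ ((∀ α, 0 ≤ c α) ∨ (∀ α, c α ≤ 0)))
    (Θ : Set V) (hΘ : Θ ⊆ Δ) :
    (Submodule.span ℤ (Φ ∩ (Submodule.span ℤ Θ : Set V))).toAddSubgroup ≤
        weightLattice P.toLin coroot (Φ ∩ (Submodule.span ℤ Θ : Set V)) ∧
    ((Submodule.span ℤ (Φ ∩ (Submodule.span ℤ Θ : Set V))).toAddSubgroup.addSubgroupOf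
        (weightLattice P.toLin coroot (Φ ∩ (Submodule.span ℤ Θ : Set V)))).index ≠ 0 ∧
    ¬ p ∣ ((Submodule.span ℤ (Φ ∩ (Submodule.span ℤ Θ : Set V))).toAddSubgroup.addSubgroupOf
        (weightLattice P.toLin coroot (Φ ∩ (Submodule.span ℤ Θ : Set V)))).index := by
    classical
  set S : Set V := Φ ∩ (Submodule.span ℤ Θ : Set V) with hSdef
  have hSΦ : S ⊆ Φ := Set.inter_subset_left
  have Sfin : S.Finite := hfin.inter_of_left _
  set Qs : Submodule ℤ V := Submodule.span ℤ S with hQsdef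
  set Pw : AddSubgroup V := weightLattice P.toLin coroot S with hPwdef
  have hmem : ∀ v : V, v ∈ Pw ↔ v ∈ Submodule.span ℚ S ∧
      ∀ α ∈ S, ∃ n : ℤ, P.toLin v (coroot α) = (n : ℚ) := fun v => Iff.rfl
  -- Step B : Q ≤ P
  have hQP' : Qs ≤ AddSubgroup.toIntSubmodule Pw := by
    rw [hQsdef]
    refine Submodule.span_le.mpr fun α hα => ?_
    exact (hmem α).mpr ⟨Submodule.subset_span hα, fun β hβ => hcrys β (hSΦ hβ) α (hSΦ hα)⟩
  have hQP : Qs.toAddSubgroup ≤ Pw := fun v hv => hQP' hv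
  -- Weyl groups
  set Wfull : Subgroup (V ≃ₗ[ℚ] V) := Subgroup.closure (s '' Φ) with hWfdef
  set WΘ : Subgroup (V ≃ₗ[ℚ] V) := Subgroup.closure (s '' S) with hWΘdef
  have hle : WΘ ≤ Wfull := Subgroup.closure_mono (Set.image_mono hSΦ)
  have hcard : Nat.card ↥Wfull ≠ 0 := fun h => hpW (h ▸ dvd_zero p)
  haveI hWfin : Finite ↥Wfull := (Nat.card_ne_zero.mp hcard).2
  haveI hWΘfin : Finite ↥WΘ :=
    Finite.of_injective (Subgroup.inclusion hle) (Subgroup.inclusion_injective hle)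
  haveI : Fintype ↥WΘ := Fintype.ofFinite _
  set N : ℕ := Nat.card ↥WΘ with hNdef
  have hNfc : N = Fintype.card ↥WΘ := Nat.card_eq_fintype_card
  have hNdvd : N ∣ Nat.card ↥Wfull := Subgroup.card_dvd_of_le hle
  have hpN : ¬ p ∣ N := fun h => hpW (h.trans hNdvd)
  have hN0 : N ≠ 0 := Nat.card_ne_zero.mpr ⟨⟨1, one_mem _⟩, hWΘfin⟩
  -- generators are involutions
  have hone : ∀ v : V, (1 : V ≃ₗ[ℚ] V) v = v := fun _ => rfl
  have hmul : ∀ (g h : V ≃ₗ[ℚ] V) (v : V), (g * h) v = g (h v) := fun _ _ _ => rfl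
  have hs_invol : ∀ α ∈ Φ, ∀ v, s α (s α v) = v := by
    intro α hα v
    rw [hs_def α hα v, hs_def α hα (v - P.toLin v (coroot α) • α), map_sub, map_smul,
      LinearMap.sub_apply, LinearMap.smul_apply, h2 α hα, smul_eq_mul]
    module
  have hinv_gen : ∀ α ∈ Φ, (s α)⁻¹ = s α := by
    intro α hα
    exact inv_eq_of_mul_eq_one_left
      (LinearEquiv.toLinearMap_injective (LinearMap.ext fun v => hs_invol α hα v))
  have hXinv : (s '' S)⁻¹ = s '' S := by
    ext g
    simp only [Set.mem_inv, Set.mem_image]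
    constructor
    · rintro ⟨α, hα, hgα⟩
      exact ⟨α, hα, by rw [← inv_inv g, ← hgα, hinv_gen α (hSΦ hα)]⟩
    · rintro ⟨α, hα, rfl⟩
      exact ⟨α, hα, (hinv_gen α (hSΦ hα)).symm⟩
  -- key invariance property of the Weyl group of the subsystem
  have key : ∀ g ∈ WΘ, (∀ v ∈ Submodule.span ℚ S, g v ∈ Submodule.span ℚ S) ∧
      ∀ v ∈ Pw, g v ∈ Pw ∧ g v - v ∈ Qs := by
    have key' : ∀ g ∈ Submonoid.closure (s '' S),
        (∀ v ∈ Submodule.span ℚ S, g v ∈ Submodule.span ℚ S) ∧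
        ∀ v ∈ Pw, g v ∈ Pw ∧ g v - v ∈ Qs := by
      intro g hg
      induction hg using Submonoid.closure_induction with
      | mem x hx =>
        obtain ⟨α, hαS, rfl⟩ := hx
        have hαΦ := hSΦ hαS
        constructor
        · intro v hv
          rw [hs_def α hαΦ v]
          exact sub_mem hv (Submodule.smul_mem _ _ (Submodule.subset_span hαS))
        · intro v hv
          obtain ⟨hv1, hv2⟩ := (hmem v).mp hv
          obtain ⟨m, hm⟩ := hv2 α hαS
          refine ⟨(hmem _).mpr ⟨?_, ?_⟩, ?_⟩
          · rw [hs_def α hαΦ v]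
            exact sub_mem hv1 (Submodule.smul_mem _ _ (Submodule.subset_span hαS))
          · intro β hβS
            obtain ⟨k, hk⟩ := hv2 β hβS
            obtain ⟨l, hl⟩ := hcrys β (hSΦ hβS) α hαΦ
            refine ⟨k - m * l, ?_⟩
            rw [hs_def α hαΦ v, map_sub, map_smul, LinearMap.sub_apply, LinearMap.smul_apply,
              hk, hl, hm, smul_eq_mul]
            push_cast; ring
          · rw [hs_def α hαΦ v, hm, sub_sub_cancel_left, Int.cast_smul_eq_zsmul ℚ m α]
            exact neg_mem (Submodule.smul_mem _ m (Submodule.subset_span hαS))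
      | one =>
        refine ⟨fun v hv => by rwa [hone], fun v hv => ⟨by rwa [hone], ?_⟩⟩
        rw [hone, sub_self]; exact zero_mem _
      | mul x y hx hy ihx ihy =>
        refine ⟨fun v hv => ?_, fun v hv => ?_⟩
        · rw [hmul]; exact ihx.1 _ (ihy.1 v hv)
        · have h1 := ihy.2 v hv
          have h2' := ihx.2 _ h1.1
          refine ⟨by rw [hmul]; exact h2'.1, ?_⟩
          have : (x * y) v - v = (x ((y : V ≃ₗ[ℚ] V) v) - y v) + (y v - v) := by
            rw [hmul]; abel
          rw [this]
          exact add_mem h2'.2 h1.2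
    intro g hg
    apply key'
    have h : g ∈ (Subgroup.closure (s '' S)).toSubmonoid := hg
    rwa [Subgroup.closure_toSubmonoid, hXinv, Set.union_self] at h
  -- positive definite invariant form
  obtain ⟨F, hF1, hF2⟩ := exists_posdef_form V
  set G : V →ₗ[ℚ] V →ₗ[ℚ] ℚ :=
    ∑ w : ↥WΘ, F.compl₁₂ ((w : V ≃ₗ[ℚ] V) : V →ₗ[ℚ] V) ((w : V ≃ₗ[ℚ] V) : V →ₗ[ℚ] V) with hGdef
  have hGapp : ∀ x y, G x y = ∑ w : ↥WΘ, F ((w : V ≃ₗ[ℚ] V) x) ((w : V ≃ₗ[ℚ] V) y) := by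
    intro x y
    rw [hGdef]
    simp [LinearMap.sum_apply, LinearMap.compl₁₂_apply]
  have hGinv : ∀ g : ↥WΘ, ∀ x y,
      G ((g : V ≃ₗ[ℚ] V) x) ((g : V ≃ₗ[ℚ] V) y) = G x y := by
    intro g x y
    rw [hGapp, hGapp]
    exact Fintype.sum_equiv (Equiv.mulRight g)
      (fun w => F ((w : V ≃ₗ[ℚ] V) ((g : V ≃ₗ[ℚ] V) x)) ((w : V ≃ₗ[ℚ] V) ((g : V ≃ₗ[ℚ] V) y)))
      (fun w => F ((w : V ≃ₗ[ℚ] V) x) ((w : V ≃ₗ[ℚ] V) y)) (fun w => rfl)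
  -- main step : N • l ∈ Qs for l ∈ Pw
  have hNQ : ∀ l ∈ Pw, (N : ℤ) • l ∈ Qs := by
    intro l hl
    have hl1 : l ∈ Submodule.span ℚ S := ((hmem l).mp hl).1
    set u : V := ∑ w : ↥WΘ, (w : V ≃ₗ[ℚ] V) l with hu
    have hufix : ∀ α ∈ S, s α u = u := by
      intro α hα
      have hsα : s α ∈ WΘ := Subgroup.subset_closure ⟨α, hα, rfl⟩
      rw [hu, map_sum]
      exact Fintype.sum_equiv (Equiv.mulLeft (⟨s α, hsα⟩ : ↥WΘ))
        (fun w => s α ((w : V ≃ₗ[ℚ] V) l)) (fun w => (w : V ≃ₗ[ℚ] V) l) (fun w => rfl)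
    have huS : u ∈ Submodule.span ℚ S :=
      Submodule.sum_mem _ fun w _ => (key w w.2).1 l hl1
    have hsαα : ∀ α ∈ S, s α α = -α := by
      intro α hα
      rw [hs_def α (hSΦ hα) α, h2 α (hSΦ hα), two_smul]
      abel
    have hGuα : ∀ α ∈ S, G u α = 0 := by
      intro α hα
      have hsα : s α ∈ WΘ := Subgroup.subset_closure ⟨α, hα, rfl⟩
      have h := hGinv ⟨s α, hsα⟩ u α
      simp only at h
      rw [hufix α hα, hsαα α hα, map_neg] at h
      linarith
    have hGu0 : ∀ v ∈ Submodule.span ℚ S, G u v = 0 := by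
      intro v hv
      refine Submodule.span_induction (fun x hx => hGuα x hx) (map_zero _) ?_ ?_ hv
      · intro x y _ _ h1 h2'
        rw [map_add, h1, h2', add_zero]
      · intro a x _ h1
        rw [map_smul, h1, smul_zero]
    have hu0 : u = 0 := by
      have h := hGu0 u huS
      rw [hGapp] at h
      have hall := (Finset.sum_eq_zero_iff_of_nonneg (fun w _ => hF1 _)).mp h
      have h1 := hall 1 (Finset.mem_univ _)
      have hcoe : ((1 : ↥WΘ) : V ≃ₗ[ℚ] V) u = u := rfl
      rw [hcoe] at h1
      exact hF2 u h1
    have hdiff : ∑ w : ↥WΘ, ((w : V ≃ₗ[ℚ] V) l - l) ∈ Qs :=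
      Submodule.sum_mem _ fun w _ => ((key w w.2).2 l hl).2
    have hsum : ∑ w : ↥WΘ, ((w : V ≃ₗ[ℚ] V) l - l) = u - (N : ℤ) • l := by
      rw [Finset.sum_sub_distrib, Finset.sum_const, Finset.card_univ, natCast_zsmul, hNfc]
    rw [hsum, hu0, zero_sub] at hdiff
    simpa using Submodule.neg_mem _ hdiff
  -- finiteness of the quotient
  set H : AddSubgroup ↥Pw := Qs.toAddSubgroup.addSubgroupOf Pw with hHdef
  haveI : IsNoetherian ℤ ↥Qs := isNoetherian_of_fg_of_noetherian Qs (Submodule.fg_span Sfin)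
  have hNne : ((N : ℤ) : ℚ) ≠ 0 := by exact_mod_cast hN0
  let ψ : ↥Pw →+ ↥Qs :=
    { toFun := fun x => ⟨(N : ℤ) • (x : V), hNQ x x.2⟩
      map_zero' := by ext; simp
      map_add' := by intro x y; ext; simp [smul_add] }
  have hψinj : Function.Injective ψ := by
    intro x y hxy
    have h1 : (N : ℤ) • (x : V) = (N : ℤ) • (y : V) := congrArg Subtype.val hxy
    have h2' : ((N : ℤ) : ℚ) • (x : V) = ((N : ℤ) : ℚ) • (y : V) := by
      rw [Int.cast_smul_eq_zsmul, Int.cast_smul_eq_zsmul]; exact h1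
    exact Subtype.ext (smul_right_injective V hNne h2')
  haveI : Module.Finite ℤ ↥Pw := Module.Finite.of_injective ψ.toIntLinearMap hψinj
  haveI : AddGroup.FG ↥Pw := Module.Finite.iff_addGroup_fg.mp ‹Module.Finite ℤ ↥Pw›
  haveI : AddGroup.FG (↥Pw ⧸ H) :=
    AddGroup.fg_of_surjective (QuotientAddGroup.mk'_surjective H)
  have hkill : ∀ x : ↥Pw ⧸ H, N • x = 0 := by
    intro x
    induction x using QuotientAddGroup.induction_on with
    | H z =>
      rw [← QuotientAddGroup.mk_nsmul, QuotientAddGroup.eq_zero_iff,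
        AddSubgroup.mem_addSubgroupOf]
      show ((N • z : ↥Pw) : V) ∈ Qs
      have hcz : ((N • z : ↥Pw) : V) = (N : ℤ) • (z : V) := by
        push_cast [natCast_zsmul]; rfl
      rw [hcz]
      exact hNQ z z.2
  have htor : AddMonoid.IsTorsion (↥Pw ⧸ H) := fun x =>
    isOfFinAddOrder_iff_nsmul_eq_zero.mpr ⟨N, Nat.pos_of_ne_zero hN0, hkill x⟩
  haveI hfinQ : Finite (↥Pw ⧸ H) := AddCommGroup.finite_of_fg_torsion _ htor
  refine ⟨hQP, AddSubgroup.index_ne_zero_of_finite, ?_⟩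
  intro hdvd
  haveI : Fintype (↥Pw ⧸ H) := Fintype.ofFinite _
  haveI : Fact p.Prime := ⟨hp⟩
  have hdvd' : p ∣ Fintype.card (↥Pw ⧸ H) := by
    rwa [AddSubgroup.index_eq_card, Nat.card_eq_fintype_card] at hdvd
  obtain ⟨x, hx⟩ := exists_prime_addOrderOf_dvd_card p hdvd'
  have : p ∣ N := hx ▸ addOrderOf_dvd_of_nsmul_eq_zero (hkill x)
  exact hpN this
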